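/- Let K ⊆ V be a nonempty cone and 𝒻 ⊆ F̂(K) a family such that −∞ < ζ_p(co(⋃_{F ∈ 𝒻} F)) < +∞. Then for every F ∈ 𝒻, ζ_p(K ∩ F) = ζ_p(F) (where both sides equal +∞ when COP(K ∩ F) is infeasible). -/
import Mathlib


open RealInnerProductSpace

variable {V : Type*} [NormedAddCommGroup V] [InnerProductSpace ℝ V]

/-- A (not necessarily convex or closed) cone: closed under nonnegative scaling. -/
def IsCone (C : Set V) : Prop := ∀ X ∈ C, ∀ l : ℝ, 0 ≤ l → l • X ∈ C

/-- The optimal value `ζ_p(C) = inf {⟨Q, X⟩ : X ∈ C, ⟨H, X⟩ = 1}` in `[-∞, +∞]`;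
it equals `+∞` when the feasible set is empty. -/
noncomputable def zetaP (Q H : V) (C : Set V) : EReal :=
  sInf ((fun X => ((⟪Q, X⟫ : ℝ) : EReal)) '' {X | X ∈ C ∧ ⟪H, X⟫ = 1})

/-- `F̂(K)`: the family of all convex cones `J ⊆ co K` with `co (K ∩ J) = J`. -/
def Fhat (K : Set V) : Set (Set V) :=
  {J | Convex ℝ J ∧ IsCone J ∧ J ⊆ convexHull ℝ K ∧ convexHull ℝ (K ∩ J) = J}

/-- A convex cone is closed under nonnegative combinations (with positive total weight). -/
lemma cone_comb {F : Set V} (hF : Convex ℝ F) (hFc : IsCone F)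
    {u v : V} (hu : u ∈ F) (hv : v ∈ F) {a b : ℝ} (ha : 0 ≤ a) (hb : 0 ≤ b)
    (hab : 0 < a + b) : a • u + b • v ∈ F := by
  have h1 : (a / (a + b)) • u + (b / (a + b)) • v ∈ F :=
    hF hu hv (by positivity) (by positivity) (by field_simp)
  have h2 := hFc _ h1 (a + b) hab.le
  rw [smul_add, smul_smul, smul_smul] at h2
  have e1 : (a + b) * (a / (a + b)) = a := by field_simp
  have e2 : (a + b) * (b / (a + b)) = b := by field_simp
  rwa [e1, e2] at h2

/-- Theorem 3.3 (ii): for a family `𝓕 ⊆ F̂(K)` with `-∞ < ζ_p(co (⋃ 𝓕)) < ∞`,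
`ζ_p(K ∩ F) = ζ_p(F)` for every `F ∈ 𝓕`. -/
theorem stmt_13 [FiniteDimensional ℝ V] (Q H : V) (hH : H ≠ 0) (K : Set V)
    (hKne : K.Nonempty) (hKcone : IsCone K)
    (𝓕 : Set (Set V)) (h𝓕 : 𝓕 ⊆ Fhat K)
    (hfin : ⊥ < zetaP Q H (convexHull ℝ (⋃₀ 𝓕)) ∧ zetaP Q H (convexHull ℝ (⋃₀ 𝓕)) < ⊤) :
    ∀ F ∈ 𝓕, zetaP Q H (K ∩ F) = zetaP Q H F := by
  intro F hF
  obtain ⟨hFconv, hFcone, hFsub, hFhull⟩ := h𝓕 hF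
  obtain ⟨hbot, htop⟩ := hfin
  set z := zetaP Q H (convexHull ℝ (⋃₀ 𝓕)) with hz
  set r : ℝ := z.toReal with hr
  have hzr : z = (r : EReal) := (EReal.coe_toReal htop.ne hbot.ne').symm
  -- every feasible point of F has value at least r
  have hA : ∀ Y ∈ F, ⟪H, Y⟫ = (1 : ℝ) → r ≤ ⟪Q, Y⟫ := by
    intro Y hY hHY
    have hmem : ((⟪Q, Y⟫ : ℝ) : EReal) ∈
        ((fun X => ((⟪Q, X⟫ : ℝ) : EReal)) ''
          {X | X ∈ convexHull ℝ (⋃₀ 𝓕) ∧ ⟪H, X⟫ = 1}) :=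
      Set.mem_image_of_mem _
        ⟨subset_convexHull ℝ _ (Set.mem_sUnion.2 ⟨F, hF, hY⟩), hHY⟩
    have h1 : z ≤ ((⟪Q, Y⟫ : ℝ) : EReal) := sInf_le hmem
    rw [hzr] at h1
    exact_mod_cast h1
  apply le_antisymm
  · -- zetaP (K ∩ F) ≤ zetaP F
    apply le_sInf
    rintro e ⟨X, ⟨hXF, hXH⟩, rfl⟩
    have hrX : r ≤ ⟪Q, X⟫ := hA X hXF hXH
    -- X is a convex combination of points of K ∩ F
    have hXhull : X ∈ convexHull ℝ (K ∩ F) := by rw [hFhull]; exact hXF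
    rw [convexHull_eq] at hXhull
    obtain ⟨ι, t, w, x, hw0, hw1, hxmem, hcm⟩ := hXhull
    have hXsum : ∑ i ∈ t, w i • x i = X := by
      rw [← hcm, Finset.centerMass_eq_of_sum_1 _ _ hw1]
    have hsumH : ∑ i ∈ t, w i * ⟪H, x i⟫ = 1 := by
      have : ⟪H, ∑ i ∈ t, w i • x i⟫ = (1 : ℝ) := by rw [hXsum]; exact hXH
      rw [inner_sum] at this
      simpa [real_inner_smul_right] using this
    have hsumQ : ∑ i ∈ t, w i * ⟪Q, x i⟫ = ⟪Q, X⟫ := by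
      have : ⟪Q, ∑ i ∈ t, w i • x i⟫ = ⟪Q, X⟫ := by rw [hXsum]
      rw [inner_sum] at this
      simpa [real_inner_smul_right] using this
    set P : Finset ι := t.filter (fun i => 0 < w i * ⟪H, x i⟫) with hP
    have hPne : P.Nonempty := by
      by_contra hPe
      rw [Finset.not_nonempty_iff_eq_empty] at hPe
      have hle : ∑ i ∈ t, w i * ⟪H, x i⟫ ≤ 0 := by
        apply Finset.sum_nonpos
        intro i hi
        by_contra hpos
        push_neg at hpos
        have : i ∈ P := Finset.mem_filter.2 ⟨hi, hpos⟩
        rw [hPe] at this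
        exact absurd this (Finset.notMem_empty i)
      linarith [hsumH]
    -- key estimate for indices with nonpositive ⟪H, x i⟫
    have hneg : ∀ i ∈ t, 0 < w i → ⟪H, x i⟫ ≤ 0 →
        ⟪H, x i⟫ * ⟪Q, X⟫ ≤ ⟪Q, x i⟫ := by
      intro i hi hwi hhi
      have hxiF : x i ∈ F := (hxmem i hi).2
      set v : V := x i + (-⟪H, x i⟫) • X with hvdef
      have hvF : v ∈ F := by
        have h1 : (1 : ℝ) • x i + (-⟪H, x i⟫) • X ∈ F :=
          cone_comb hFconv hFcone hxiF hXF (by norm_num) (by linarith) (by linarith)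
        simpa [hvdef] using h1
      have hval : ∀ s : ℝ, 0 ≤ s →
          r ≤ ⟪Q, X⟫ + s * (⟪Q, x i⟫ - ⟪H, x i⟫ * ⟪Q, X⟫) := by
        intro s hs
        have hmemF : X + s • v ∈ F := by
          have h1 : (1 : ℝ) • X + s • v ∈ F :=
            cone_comb hFconv hFcone hXF hvF (by norm_num) hs (by linarith)
          simpa using h1
        have hH1 : ⟪H, X + s • v⟫ = (1 : ℝ) := by
          rw [inner_add_right, real_inner_smul_right, hvdef, inner_add_right,
            real_inner_smul_right, hXH]
          ring
        have h2 := hA _ hmemF hH1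
        have hQv : ⟪Q, X + s • v⟫ = ⟪Q, X⟫ + s * (⟪Q, x i⟫ - ⟪H, x i⟫ * ⟪Q, X⟫) := by
          rw [inner_add_right, real_inner_smul_right, hvdef, inner_add_right,
            real_inner_smul_right]
          ring
        rwa [hQv] at h2
      set D : ℝ := ⟪Q, x i⟫ - ⟪H, x i⟫ * ⟪Q, X⟫ with hD
      by_contra hcon
      push_neg at hcon
      have hDneg : D < 0 := by rw [hD]; linarith
      have hDne : D ≠ 0 := hDneg.ne
      have hs0 : 0 ≤ (⟪Q, X⟫ - r + 1) / (-D) := div_nonneg (by linarith) (by linarith)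
      have h3 := hval _ hs0
      have heq : (⟪Q, X⟫ - r + 1) / (-D) * D = -(⟪Q, X⟫ - r + 1) := by
        rw [div_mul_eq_mul_div, mul_div_assoc, div_neg, div_self hDne]
        ring
      rw [heq] at h3
      linarith
    -- properties of P
    have hPprop : ∀ i ∈ P, 0 < w i ∧ 0 < ⟪H, x i⟫ := by
      intro i hi
      obtain ⟨hit, hpos⟩ := Finset.mem_filter.1 hi
      rcases mul_pos_iff.1 hpos with ⟨h1, h2⟩ | ⟨h1, h2⟩
      · exact ⟨h1, h2⟩
      · exact absurd h1 (not_lt.2 (hw0 i hit))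
    set c : ℝ := P.inf' hPne (fun i => (⟪H, x i⟫)⁻¹ * ⟪Q, x i⟫) with hc
    -- sum splitting estimate : ⟪Q, X⟫ ≥ c
    have ha_pos : 0 < ∑ i ∈ P, w i * ⟪H, x i⟫ := by
      apply Finset.sum_pos
      · intro i hi
        exact (Finset.mem_filter.1 hi).2
      · exact hPne
    have hsplitH : ∑ i ∈ P, w i * ⟪H, x i⟫
        + ∑ i ∈ t.filter (fun i => ¬ 0 < w i * ⟪H, x i⟫), w i * ⟪H, x i⟫ = 1 := by
      rw [hP, Finset.sum_filter_add_sum_filter_not]; exact hsumH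
    have hsplitQ : ∑ i ∈ P, w i * ⟪Q, x i⟫
        + ∑ i ∈ t.filter (fun i => ¬ 0 < w i * ⟪H, x i⟫), w i * ⟪Q, x i⟫ = ⟪Q, X⟫ := by
      rw [hP, Finset.sum_filter_add_sum_filter_not]; exact hsumQ
    have hboundP : ∀ i ∈ P, w i * ⟪H, x i⟫ * c ≤ w i * ⟪Q, x i⟫ := by
      intro i hi
      obtain ⟨hwi, hhi⟩ := hPprop i hi
      have hinf : c ≤ (⟪H, x i⟫)⁻¹ * ⟪Q, x i⟫ := Finset.inf'_le _ hi
      have h1 : ⟪H, x i⟫ * c ≤ ⟪H, x i⟫ * ((⟪H, x i⟫)⁻¹ * ⟪Q, x i⟫) :=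
        mul_le_mul_of_nonneg_left hinf hhi.le
      rw [← mul_assoc, mul_inv_cancel₀ hhi.ne', one_mul] at h1
      calc w i * ⟪H, x i⟫ * c = w i * (⟪H, x i⟫ * c) := by ring
        _ ≤ w i * ⟪Q, x i⟫ := mul_le_mul_of_nonneg_left h1 hwi.le
    have hboundN : ∀ i ∈ t.filter (fun i => ¬ 0 < w i * ⟪H, x i⟫),
        w i * ⟪H, x i⟫ * ⟪Q, X⟫ ≤ w i * ⟪Q, x i⟫ := by
      intro i hi
      obtain ⟨hit, hnpos⟩ := Finset.mem_filter.1 hi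
      rcases eq_or_lt_of_le (hw0 i hit) with hw | hw
      · simp [← hw]
      · have hhi : ⟪H, x i⟫ ≤ 0 := by
          by_contra hh
          push_neg at hh
          exact hnpos (mul_pos hw hh)
        have := hneg i hit hw hhi
        calc w i * ⟪H, x i⟫ * ⟪Q, X⟫ = w i * (⟪H, x i⟫ * ⟪Q, X⟫) := by ring
          _ ≤ w i * ⟪Q, x i⟫ := mul_le_mul_of_nonneg_left this hw.le
    have hQXc : c ≤ ⟪Q, X⟫ := by
      have h1 : (∑ i ∈ P, w i * ⟪H, x i⟫) * c ≤ ∑ i ∈ P, w i * ⟪Q, x i⟫ := by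
        rw [Finset.sum_mul]
        exact Finset.sum_le_sum hboundP
      have h2 : (∑ i ∈ t.filter (fun i => ¬ 0 < w i * ⟪H, x i⟫), w i * ⟪H, x i⟫) * ⟪Q, X⟫
          ≤ ∑ i ∈ t.filter (fun i => ¬ 0 < w i * ⟪H, x i⟫), w i * ⟪Q, x i⟫ := by
        rw [Finset.sum_mul]
        exact Finset.sum_le_sum hboundN
      have hb : ∑ i ∈ t.filter (fun i => ¬ 0 < w i * ⟪H, x i⟫), w i * ⟪H, x i⟫
          = 1 - ∑ i ∈ P, w i * ⟪H, x i⟫ := by linarith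
      rw [hb, sub_mul, one_mul] at h2
      have h4 : (∑ i ∈ P, w i * ⟪H, x i⟫) * c
          ≤ (∑ i ∈ P, w i * ⟪H, x i⟫) * ⟪Q, X⟫ := by linarith
      exact le_of_mul_le_mul_left h4 ha_pos
    -- the minimizing index gives a feasible point of K ∩ F
    obtain ⟨i0, hi0P, hi0⟩ := P.exists_mem_eq_inf' hPne (fun i => (⟪H, x i⟫)⁻¹ * ⟪Q, x i⟫)
    obtain ⟨hwi0, hhi0⟩ := hPprop i0 hi0P
    have hi0t : i0 ∈ t := (Finset.mem_filter.1 hi0P).1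
    set y : V := (⟪H, x i0⟫)⁻¹ • x i0 with hy
    have hyKF : y ∈ K ∩ F := by
      obtain ⟨hxK, hxF⟩ := hxmem i0 hi0t
      exact ⟨hKcone _ hxK _ (inv_nonneg.2 hhi0.le),
             hFcone _ hxF _ (inv_nonneg.2 hhi0.le)⟩
    have hyH : ⟪H, y⟫ = (1 : ℝ) := by
      rw [hy, real_inner_smul_right, inv_mul_cancel₀ hhi0.ne']
    have hyQ : ⟪Q, y⟫ = c := by
      rw [hy, real_inner_smul_right, hc]
      exact hi0.symm
    have hle1 : zetaP Q H (K ∩ F) ≤ ((⟪Q, y⟫ : ℝ) : EReal) :=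
      sInf_le (Set.mem_image_of_mem _ ⟨hyKF, hyH⟩)
    calc zetaP Q H (K ∩ F) ≤ ((⟪Q, y⟫ : ℝ) : EReal) := hle1
      _ ≤ ((⟪Q, X⟫ : ℝ) : EReal) := by exact_mod_cast (hyQ ▸ hQXc)
  · -- zetaP F ≤ zetaP (K ∩ F)
    apply sInf_le_sInf
    apply Set.image_mono
    rintro X ⟨hXKF, hXH⟩
    exact ⟨hXKF.2, hXH⟩
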